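/- Let 0 < t ≤ T and define M_t(v) = (2πt)^{-1/2} e^{-v²/(2t)}. If |T − t| ≤ ε with ε < t/2, then ∫_ℝ (1+v²) (M_T(v) − M_t(v))² M_T(v)^{-1} dv ≤ C(t) ε² for a constant C(t) depending only on t. -/

import Mathlib

open MeasureTheory Real

/-- The Maxwellian `M_t(v) = (2πt)^{-1/2} exp(-v²/(2t))`. -/
noncomputable def maxwellian (t v : ℝ) : ℝ :=
  Real.exp (-v ^ 2 / (2 * t)) / Real.sqrt (2 * Real.pi * t)

lemma maxwellian_pos {t : ℝ} (ht : 0 < t) (v : ℝ) : 0 < maxwellian t v := by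
  unfold maxwellian
  have : 0 < 2 * Real.pi * t := by positivity
  positivity

lemma maxwellian_hasDerivAt (v s : ℝ) (hs : 0 < s) :
    HasDerivAt (fun s => maxwellian s v)
      (maxwellian s v * (v ^ 2 / (2 * s ^ 2) - 1 / (2 * s))) s := by
  have h2πs : (0:ℝ) < 2 * Real.pi * s := by positivity
  set S := Real.sqrt (2 * Real.pi * s) with hSdef
  have hSpos : 0 < S := Real.sqrt_pos.mpr h2πs
  have hSne : S ≠ 0 := ne_of_gt hSpos
  have hS2 : S ^ 2 = 2 * Real.pi * s := Real.sq_sqrt h2πs.le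
  clear_value S
  have h1 : HasDerivAt (fun x : ℝ => -v ^ 2 / (2 * x)) (v ^ 2 / (2 * s ^ 2)) s := by
    have h := (hasDerivAt_inv (ne_of_gt hs)).const_mul (-v ^ 2 / 2)
    have e1 : -v ^ 2 / 2 * -(s ^ 2)⁻¹ = v ^ 2 / (2 * s ^ 2) := by
      field_simp
    rw [e1] at h
    exact h.congr_of_eventuallyEq (Filter.Eventually.of_forall fun x => by ring)
  have h2 : HasDerivAt (fun x : ℝ => Real.exp (-v ^ 2 / (2 * x)))
      (Real.exp (-v ^ 2 / (2 * s)) * (v ^ 2 / (2 * s ^ 2))) s := h1.exp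
  have h3 : HasDerivAt (fun x : ℝ => Real.sqrt (2 * Real.pi * x))
      (1 / (2 * S) * (2 * Real.pi)) s := by
    have hlin : HasDerivAt (fun x : ℝ => 2 * Real.pi * x) (2 * Real.pi) s := by
      simpa using (hasDerivAt_id s).const_mul (2 * Real.pi)
    rw [hSdef]
    exact (Real.hasDerivAt_sqrt (ne_of_gt h2πs)).comp s hlin
  have h4 := h2.div h3 (hSdef ▸ hSne)
  have key : 1 / (2 * S) * (2 * Real.pi) = S / (2 * s) := by
    field_simp
    nlinarith [hS2, hSpos]
  rw [key] at h4
  have h4 : HasDerivAt (fun s => maxwellian s v) _ s := h4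
  convert h4 using 1
  unfold maxwellian
  rw [← hSdef]
  rw [hS2.symm] at *
  field_simp

noncomputable def Hfun (t v : ℝ) : ℝ :=
  Real.sqrt (3 * Real.pi * t) / (2 * Real.pi * t) *
    ((1 + v ^ 2) * (v ^ 2 / (2 * t ^ 2) + 1 / (2 * t)) ^ 2) *
    Real.exp (-(1 / (6 * t)) * v ^ 2)

lemma Hfun_nonneg {t : ℝ} (ht : 0 < t) (v : ℝ) : 0 ≤ Hfun t v := by
  unfold Hfun
  positivity

lemma integrable_pow_gauss {b : ℝ} (hb : 0 < b) (n : ℕ) :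
    Integrable (fun v : ℝ => v ^ n * Real.exp (-b * v ^ 2)) := by
  have h := integrable_rpow_mul_exp_neg_mul_sq hb (s := (n : ℝ)) (lt_of_lt_of_le (by norm_num) (Nat.cast_nonneg n))
  simpa [Real.rpow_natCast] using h

lemma integrable_Hfun {t : ℝ} (ht : 0 < t) : Integrable (fun v : ℝ => Hfun t v) := by
  have hb : (0:ℝ) < 1 / (6 * t) := by positivity
  set b := 1 / (6 * t) with hbdef
  set K := Real.sqrt (3 * Real.pi * t) / (2 * Real.pi * t) with hKdef
  have h0 := (integrable_pow_gauss hb 0).const_mul (K * (1 / (2 * t)) ^ 2)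
  have h2 := (integrable_pow_gauss hb 2).const_mul
    (K * (1 / (2 * t ^ 3) + 1 / (4 * t ^ 2)))
  have h4 := (integrable_pow_gauss hb 4).const_mul
    (K * (1 / (4 * t ^ 4) + 1 / (2 * t ^ 3)))
  have h6 := (integrable_pow_gauss hb 6).const_mul (K * (1 / (4 * t ^ 4)))
  have h := ((h0.add h2).add h4).add h6
  refine h.congr (Filter.Eventually.of_forall fun v => ?_)
  simp only [Pi.add_apply]
  unfold Hfun
  rw [← hbdef, ← hKdef]
  ring

lemma pointwise_bound {t T : ℝ} (ht : 0 < t) (hT : t ≤ T) (hT3 : T < 3 * t / 2) (v : ℝ) :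
    (1 + v ^ 2) * (maxwellian T v - maxwellian t v) ^ 2 / maxwellian T v ≤
      (T - t) ^ 2 * Hfun t v := by
  have hπ := Real.pi_pos
  have hTpos : 0 < T := lt_of_lt_of_le ht hT
  have hMT := maxwellian_pos hTpos v
  have hP : (0:ℝ) ≤ v ^ 2 / (2 * t ^ 2) + 1 / (2 * t) := by
    have : (0:ℝ) ≤ 1 / (2 * t) := by positivity
    have : (0:ℝ) ≤ v ^ 2 / (2 * t ^ 2) := by positivity
    linarith
  set D := Real.exp (-v ^ 2 / (3 * t)) / Real.sqrt (2 * Real.pi * t) *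
      (v ^ 2 / (2 * t ^ 2) + 1 / (2 * t)) with hD
  have hDnn : 0 ≤ D := by
    apply mul_nonneg _ hP
    positivity
  -- derivative bound on [t, T]
  have hbound : ∀ s ∈ Set.Icc t T,
      ‖maxwellian s v * (v ^ 2 / (2 * s ^ 2) - 1 / (2 * s))‖ ≤ D := by
    intro s hs
    obtain ⟨hs1, hs2⟩ := hs
    have hspos : 0 < s := lt_of_lt_of_le ht hs1
    have hMpos := maxwellian_pos hspos v
    rw [Real.norm_eq_abs, abs_mul, abs_of_pos hMpos]
    have hM : maxwellian s v ≤ Real.exp (-v ^ 2 / (3 * t)) / Real.sqrt (2 * Real.pi * t) := by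
      unfold maxwellian
      apply div_le_div₀ (Real.exp_pos _).le _ (Real.sqrt_pos.mpr (by positivity))
        (Real.sqrt_le_sqrt (by nlinarith))
      apply Real.exp_le_exp.mpr
      rw [div_le_div_iff₀ (by linarith) (by linarith)]
      nlinarith [sq_nonneg v]
    have habs : |v ^ 2 / (2 * s ^ 2) - 1 / (2 * s)| ≤ v ^ 2 / (2 * t ^ 2) + 1 / (2 * t) := by
      have ht2 : t ^ 2 ≤ s ^ 2 := by nlinarith
      have e1 : v ^ 2 / (2 * s ^ 2) ≤ v ^ 2 / (2 * t ^ 2) := by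
        rw [div_le_div_iff₀ (by positivity) (by positivity)]
        nlinarith [sq_nonneg v]
      have e2 : 1 / (2 * s) ≤ 1 / (2 * t) := by
        apply one_div_le_one_div_of_le (by linarith) (by linarith)
      have e3 : (0:ℝ) ≤ 1 / (2 * s) := by positivity
      have e4 : (0:ℝ) ≤ v ^ 2 / (2 * s ^ 2) := by positivity
      have e5 : (0:ℝ) ≤ v ^ 2 / (2 * t ^ 2) := by positivity
      rcases abs_cases (v ^ 2 / (2 * s ^ 2) - 1 / (2 * s)) with ⟨h, _⟩ | ⟨h, _⟩ <;>
        rw [h] <;> linarith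
    rw [hD]
    exact mul_le_mul hM habs (abs_nonneg _) (by positivity)
  -- mean value inequality
  have hmvt : |maxwellian T v - maxwellian t v| ≤ D * (T - t) := by
    have h := (convex_Icc t T).norm_image_sub_le_of_norm_hasDerivWithin_le
      (fun s hs => (maxwellian_hasDerivAt v s (lt_of_lt_of_le ht hs.1)).hasDerivWithinAt)
      hbound (Set.left_mem_Icc.mpr hT) (Set.right_mem_Icc.mpr hT)
    simpa [Real.norm_eq_abs, abs_of_nonneg (sub_nonneg.mpr hT)] using h
  have hsq : (maxwellian T v - maxwellian t v) ^ 2 ≤ (D * (T - t)) ^ 2 := by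
    rw [← sq_abs]
    exact pow_le_pow_left₀ (abs_nonneg _) hmvt 2
  have step1 : (1 + v ^ 2) * (maxwellian T v - maxwellian t v) ^ 2 / maxwellian T v ≤
      (1 + v ^ 2) * (D * (T - t)) ^ 2 * (maxwellian T v)⁻¹ := by
    rw [div_eq_mul_inv]
    apply mul_le_mul_of_nonneg_right _ (inv_nonneg.mpr hMT.le)
    exact mul_le_mul_of_nonneg_left hsq (by positivity)
  have hinv : (maxwellian T v)⁻¹ ≤ Real.sqrt (3 * Real.pi * t) * Real.exp (v ^ 2 / (2 * t)) := by
    have heq : (maxwellian T v)⁻¹ = Real.sqrt (2 * Real.pi * T) * Real.exp (v ^ 2 / (2 * T)) := by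
      unfold maxwellian
      rw [inv_div, neg_div, Real.exp_neg, div_inv_eq_mul]
    rw [heq]
    apply mul_le_mul (Real.sqrt_le_sqrt (by nlinarith)) _ (Real.exp_pos _).le
      (Real.sqrt_nonneg _)
    apply Real.exp_le_exp.mpr
    rw [div_le_div_iff₀ (by linarith) (by linarith)]
    nlinarith [sq_nonneg v]
  have step2 : (1 + v ^ 2) * (D * (T - t)) ^ 2 * (maxwellian T v)⁻¹ ≤
      (1 + v ^ 2) * (D * (T - t)) ^ 2 *
        (Real.sqrt (3 * Real.pi * t) * Real.exp (v ^ 2 / (2 * t))) := by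
    apply mul_le_mul_of_nonneg_left hinv (by positivity)
  have hfinal : (1 + v ^ 2) * (D * (T - t)) ^ 2 *
      (Real.sqrt (3 * Real.pi * t) * Real.exp (v ^ 2 / (2 * t))) = (T - t) ^ 2 * Hfun t v := by
    have hS2 : Real.sqrt (2 * Real.pi * t) ^ 2 = 2 * Real.pi * t :=
      Real.sq_sqrt (by positivity)
    have hexp : Real.exp (-v ^ 2 / (3 * t)) ^ 2 * Real.exp (v ^ 2 / (2 * t)) =
        Real.exp (-(1 / (6 * t)) * v ^ 2) := by
      rw [sq, ← Real.exp_add, ← Real.exp_add]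
      congr 1
      field_simp
      ring
    unfold Hfun
    rw [hD, ← hexp, ← hS2]
    have hSne : Real.sqrt (2 * Real.pi * t) ≠ 0 := by positivity
    field_simp
    rw [Real.sq_sqrt (by positivity), Real.sq_sqrt (by positivity)]
  calc (1 + v ^ 2) * (maxwellian T v - maxwellian t v) ^ 2 / maxwellian T v ≤
      (1 + v ^ 2) * (D * (T - t)) ^ 2 * (maxwellian T v)⁻¹ := step1
    _ ≤ (1 + v ^ 2) * (D * (T - t)) ^ 2 *
        (Real.sqrt (3 * Real.pi * t) * Real.exp (v ^ 2 / (2 * t))) := step2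
    _ = (T - t) ^ 2 * Hfun t v := hfinal

/-- Maxwellians at nearby temperatures are close in the weighted `L²` norm with weight
`M_T⁻¹`: if `0 < t ≤ T` and `|T − t| ≤ ε < t/2` then
`∫ (1+v²)(M_T − M_t)² M_T⁻¹ dv ≤ C(t) ε²`. -/
theorem maxwellian_temperature_stability (t : ℝ) (ht : 0 < t) :
    ∃ C : ℝ, 0 < C ∧ ∀ T ε : ℝ, t ≤ T → |T - t| ≤ ε → ε < t / 2 →
      (∫ v : ℝ, (1 + v ^ 2) * (maxwellian T v - maxwellian t v) ^ 2 / maxwellian T v) ≤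
        C * ε ^ 2 := by
  have hInt : Integrable (fun v : ℝ => Hfun t v) := integrable_Hfun ht
  have hHnn : (0:ℝ) ≤ ∫ v : ℝ, Hfun t v :=
    integral_nonneg fun v => Hfun_nonneg ht v
  refine ⟨(∫ v : ℝ, Hfun t v) + 1, by linarith, fun T ε hT hε hε2 => ?_⟩
  have hTt : T - t ≤ ε := by
    rw [abs_of_nonneg (by linarith)] at hε
    exact hε
  have hεnn : (0:ℝ) ≤ ε := le_trans (abs_nonneg _) hε
  have hT3 : T < 3 * t / 2 := by linarith
  have hTpos : 0 < T := lt_of_lt_of_le ht hT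
  calc (∫ v : ℝ, (1 + v ^ 2) * (maxwellian T v - maxwellian t v) ^ 2 / maxwellian T v)
      ≤ ∫ v : ℝ, (T - t) ^ 2 * Hfun t v := by
        apply integral_mono_of_nonneg
        · exact Filter.Eventually.of_forall fun v => by
            have hMT := maxwellian_pos hTpos v
            positivity
        · exact hInt.const_mul _
        · exact Filter.Eventually.of_forall fun v => pointwise_bound ht hT hT3 v
    _ = (T - t) ^ 2 * ∫ v : ℝ, Hfun t v := integral_const_mul _ _
    _ ≤ ε ^ 2 * ∫ v : ℝ, Hfun t v := by
        apply mul_le_mul_of_nonneg_right _ hHnn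
        have : 0 ≤ T - t := by linarith
        nlinarith
    _ ≤ ((∫ v : ℝ, Hfun t v) + 1) * ε ^ 2 := by nlinarith [sq_nonneg ε]
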